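/- Let A be a finite nonempty set, G a symmetric positive-definite real matrix indexed by A, v ∈ ℝ^A, and C ⊆ ℝ^A a nonempty closed convex cone. Set w = G⁻¹ v and let V ∈ C satisfy ‖w − V‖_G ≤ ‖w − z‖_G for all z ∈ C (i.e., V is the G-projection of w onto C). Then ∑_α v_α V_α = ⟨w, V⟩_G ≥ ‖V‖_G² ≥ 0, and ∑_α v_α V_α = 0 if and only if V = 0. -/

import Mathlib

open Matrix

noncomputable section

/-- The quadratic form `wᵀ G w = ‖w‖_G²` associated to a matrix `G`. -/
def qform {A : Type*} [Fintype A] (G : Matrix A A ℝ) (w : A → ℝ) : ℝ :=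
  w ⬝ᵥ G.mulVec w

/-- `V` is the `G`-projection of `w` onto `C`: it belongs to `C` and minimizes `‖w − z‖_G`
over `z ∈ C`. -/
def IsGProj {A : Type*} [Fintype A] (G : Matrix A A ℝ) (C : Set (A → ℝ))
    (w V : A → ℝ) : Prop :=
  V ∈ C ∧ ∀ z ∈ C, qform G (w - V) ≤ qform G (w - z)

/-- positive correlation.  If `G` is symmetric positive definite, `C` a nonempty
closed convex cone, `w = G⁻¹ v` and `V` the `G`-projection of `w` onto `C`, then
`∑ v_α V_α = ⟨w, V⟩_G ≥ ‖V‖_G² ≥ 0`, with `∑ v_α V_α = 0` iff `V = 0`. -/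
theorem stmt_3 {A : Type*} [Fintype A] [DecidableEq A] [Nonempty A]
    (G : Matrix A A ℝ) (hG : G.PosDef) (v : A → ℝ)
    (C : Set (A → ℝ)) (hCne : C.Nonempty) (hCclosed : IsClosed C)
    (hCconv : Convex ℝ C) (hCcone : ∀ c : ℝ, 0 ≤ c → ∀ z ∈ C, c • z ∈ C)
    (V : A → ℝ) (hV : IsGProj G C (G⁻¹.mulVec v) V) :
    v ⬝ᵥ V = (G⁻¹.mulVec v) ⬝ᵥ G.mulVec V ∧
    qform G V ≤ (G⁻¹.mulVec v) ⬝ᵥ G.mulVec V ∧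
    0 ≤ qform G V ∧
    (v ⬝ᵥ V = 0 ↔ V = 0) := by
  set w : A → ℝ := G⁻¹.mulVec v with hw
  -- symmetry of the bilinear form
  have hsym : ∀ x y : A → ℝ, x ⬝ᵥ G.mulVec y = y ⬝ᵥ G.mulVec x := by
    intro x y
    have hT : Gᵀ = G := by
      have := hG.1
      simpa [Matrix.IsHermitian, Matrix.conjTranspose_eq_transpose_of_trivial] using this
    rw [Matrix.dotProduct_mulVec, ← Matrix.mulVec_transpose, hT, dotProduct_comm]
  have hGw : G.mulVec w = v := by
    rw [hw, Matrix.mulVec_mulVec,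
      Matrix.mul_nonsing_inv _ (isUnit_iff_isUnit_det _ |>.1 hG.isUnit), Matrix.one_mulVec]
  have hpos : ∀ x : A → ℝ, x ≠ 0 → 0 < qform G x := by
    intro x hx
    have := hG.dotProduct_mulVec_pos hx
    simpa [qform] using this
  have hnonneg : ∀ x : A → ℝ, 0 ≤ qform G x := by
    intro x
    rcases eq_or_ne x 0 with h | h
    · simp [h, qform]
    · exact (hpos x h).le
  set a : ℝ := w ⬝ᵥ G.mulVec V with ha
  set b : ℝ := qform G V with hb
  have hexp : ∀ c : ℝ, qform G (w - c • V) = qform G w - 2*c*a + c^2*b := by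
    intro c
    simp only [qform, Matrix.mulVec_sub, sub_dotProduct, dotProduct_sub,
      Matrix.mulVec_smul, smul_dotProduct, dotProduct_smul, smul_eq_mul,
      ha, hb]
    linear_combination (-c) * hsym V w
  have hineq : ∀ c : ℝ, 0 ≤ c → 2*(c-1)*a ≤ (c^2-1)*b := by
    intro c hc
    have hz := hV.2 (c • V) (hCcone c hc V hV.1)
    have h1 : qform G (w - V) = qform G w - 2*a + b := by
      have := hexp 1
      simpa using this
    rw [h1, hexp c] at hz
    nlinarith
  have hbnn : (0:ℝ) ≤ b := hnonneg V
  have hab : a = b := by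
    rcases eq_or_lt_of_le hbnn with hb0 | hb0
    · have hV0 : V = 0 := by
        by_contra h
        exact absurd hb0.symm (hpos V h).ne'
      simp [ha, hb, hV0, qform]
    · have hle : a ≤ b := by
        by_contra h
        push_neg at h
        set t : ℝ := (a - b)/b with ht
        have hε : (0:ℝ) < t := div_pos (by linarith) hb0
        have h2 : t * b = a - b := div_mul_cancel₀ _ hb0.ne'
        have h3 : t * (t * b) = t * (a - b) := by rw [h2]
        have := hineq (1 + t) (by linarith)
        nlinarith [this, h2, h3, mul_pos hε (show (0:ℝ) < a - b by linarith)]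
      have hge : b ≤ a := by
        by_contra h
        push_neg at h
        set ε : ℝ := min 1 ((b - a)/b) with hε
        have hε0 : 0 < ε := lt_min one_pos (div_pos (by linarith) hb0)
        have hε1 : ε ≤ 1 := min_le_left _ _
        have hε2 : ε ≤ (b - a)/b := min_le_right _ _
        have := hineq (1 - ε) (by linarith)
        have h2 : ε * b ≤ b - a := by
          rw [← div_mul_cancel₀ (b - a) hb0.ne']
          exact mul_le_mul_of_nonneg_right hε2 hbnn
        nlinarith
      linarith
  have hvV : v ⬝ᵥ V = a := by
    rw [← hGw, dotProduct_comm]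
    exact (hsym V w).trans ha.symm
  refine ⟨hvV.trans rfl, ?_, hnonneg V, ?_⟩
  · exact hab.ge
  · rw [hvV, hab]
    constructor
    · intro h
      by_contra hne
      exact absurd h (hpos V hne).ne'
    · intro h
      simp [hb, h, qform]
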